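/- arXiv:2502.11226 — 7 statements merged into one kernel-verified Lean document; each statement's English description precedes it below -/
import Mathlib

section
/- Let M be a conical refinement commutative monoid and I an order ideal of M. For elements a, b ∈ M, the sum a + b is incomparable with every nonzero element of I if and only if both a and b are incomparable with every nonzero element of I (where we interpret the condition as vacuously true for zero elements). -/
/-- A commutative monoid is conical if `a + b = 0` implies `a = 0` and `b = 0`. -/
def IsConical (M : Type*) [AddCommMonoid M] : Prop :=
  ∀ a b : M, a + b = 0 → a = 0 ∧ b = 0

/-- The refinement property for a commutative monoid. -/
def IsRefinement (M : Type*) [AddCommMonoid M] : Prop :=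
  ∀ a₀ a₁ b₀ b₁ : M, a₀ + a₁ = b₀ + b₁ →
    ∃ c₀₀ c₀₁ c₁₀ c₁₁ : M,
      a₀ = c₀₀ + c₀₁ ∧ a₁ = c₁₀ + c₁₁ ∧ b₀ = c₀₀ + c₁₀ ∧ b₁ = c₀₁ + c₁₁

variable {M : Type*} [AddCommMonoid M]

/-- The algebraic preorder: `a ≤ b` iff `b = a + c` for some `c`. -/
def AlgLE (a b : M) : Prop := ∃ c, b = a + c

/-- Strict algebraic order: `a < b` iff `b = a + c` for some nonzero `c`. -/
def AlgLT (a b : M) : Prop := ∃ c, c ≠ 0 ∧ b = a + c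

/-- Two elements are comparable if they are equal or one is strictly below the other. -/
def CmpRel (a b : M) : Prop := a = b ∨ AlgLT a b ∨ AlgLT b a

/-- `a ∥ I` : `a` is incomparable with every nonzero element of `I`. -/
def PerpTo (a : M) (I : Set M) : Prop := ∀ x ∈ I, x ≠ 0 → ¬ CmpRel a x

/-- An order ideal: a submonoid which is downward closed for the algebraic preorder. -/
def IsOrderIdeal (I : Set M) : Prop :=
  (0 : M) ∈ I ∧ (∀ a b : M, a ∈ I → b ∈ I → a + b ∈ I) ∧
    ∀ a b : M, b ∈ I → AlgLE a b → a ∈ I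

/-- The orthogonal set `I^⊥ = {a | a ∥ I} ∪ {0}`. -/
def perpSet (I : Set M) : Set M := {a : M | a = 0 ∨ PerpTo a I}

variable (Γ : Type*) [CommGroup Γ] [DistribMulAction Γ M]

/-- If `a + b ∥ I` (when nonzero) then `a ∥ I` when `a ≠ 0`. -/
lemma perp_left {M : Type*} [AddCommMonoid M]
    (hcon : IsConical M) (I : Set M) (hI : IsOrderIdeal I) {a b : M}
    (h : a + b ≠ 0 → PerpTo (a + b) I) (ha : a ≠ 0) : PerpTo a I := by
  intro x hx hx0 hcmp
  have hab : a + b ≠ 0 := fun h0 => ha (hcon a b h0).1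
  have hperp := h hab
  -- helper: a + b is comparable with a (when a is nonzero)
  have hcab : CmpRel (a + b) a := by
    rcases eq_or_ne b 0 with rfl | hb
    · exact Or.inl (add_zero a)
    · exact Or.inr (Or.inr ⟨b, hb, rfl⟩)
  rcases hcmp with rfl | ⟨c, hc0, rfl⟩ | ⟨c, hc0, hc⟩
  · exact hperp a hx ha hcab
  · -- a < x, so a ∈ I
    have haI : a ∈ I := hI.2.2 a (a + c) hx ⟨c, rfl⟩
    exact hperp a haI ha hcab
  · -- x < a, so x < a + b
    refine hperp x hx hx0 (Or.inr (Or.inr ⟨c + b, ?_, by rw [hc, add_assoc]⟩))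
    intro h0
    exact hc0 (hcon c b h0).1

/-- Key step: if `a ∥ I` (when nonzero), `d ∈ I` nonzero, and `d ≤ a`, contradiction. -/
lemma perp_key {M : Type*} [AddCommMonoid M]
    (hcon : IsConical M) (I : Set M) {a d : M}
    (ha : a ≠ 0 → PerpTo a I) (hd : d ∈ I) (hd0 : d ≠ 0) (e : M)
    (he : a = d + e) : False := by
  have ha0 : a ≠ 0 := fun h0 => hd0 (hcon d e (he ▸ h0)).1
  refine ha ha0 d hd hd0 ?_
  rcases eq_or_ne e 0 with rfl | he0
  · exact Or.inl (by rw [he, add_zero])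
  · exact Or.inr (Or.inr ⟨e, he0, he⟩)

theorem stmt_1 {M : Type*} [AddCommMonoid M]
    (hcon : IsConical M) (href : IsRefinement M)
    (I : Set M) (hI : IsOrderIdeal I) (a b : M) :
    (a + b ≠ 0 → PerpTo (a + b) I) ↔
      ((a ≠ 0 → PerpTo a I) ∧ (b ≠ 0 → PerpTo b I)) := by
  constructor
  · intro h
    refine ⟨fun ha => perp_left hcon I hI h ha, fun hb => ?_⟩
    have h' : b + a ≠ 0 → PerpTo (b + a) I := by rw [add_comm]; exact h
    exact perp_left hcon I hI h' hb
  · rintro ⟨ha, hb⟩ hab x hx hx0 hcmp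
    rcases hcmp with heq | ⟨c, hc0, hc⟩ | ⟨c, hc0, hc⟩
    · -- a + b = x ∈ I; a ≤ x so a ∈ I
      have hane : a ≠ 0 ∨ b ≠ 0 := by
        by_contra h0
        push_neg at h0
        exact hab (by rw [h0.1, h0.2, add_zero])
      rcases hane with hane | hbne
      · have haI : a ∈ I := hI.2.2 a x hx ⟨b, heq.symm⟩
        exact ha hane a haI hane (Or.inl rfl)
      · have hbI : b ∈ I := hI.2.2 b x hx ⟨a, by rw [← heq, add_comm]⟩
        exact hb hbne b hbI hbne (Or.inl rfl)
    · -- a + b < x : x = (a+b) + c, so a ≤ x, a ∈ I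
      have hane : a ≠ 0 ∨ b ≠ 0 := by
        by_contra h0
        push_neg at h0
        exact hab (by rw [h0.1, h0.2, add_zero])
      rcases hane with hane | hbne
      · have haI : a ∈ I := hI.2.2 a x hx ⟨b + c, by rw [hc, add_assoc]⟩
        exact ha hane a haI hane (Or.inl rfl)
      · have hbI : b ∈ I := hI.2.2 b x hx ⟨a + c, by rw [hc]; ac_rfl⟩
        exact hb hbne b hbI hbne (Or.inl rfl)
    · -- x < a + b : a + b = x + c, use refinement
      obtain ⟨c00, c01, c10, c11, ha', hb', hx', _⟩ := href a b x c hc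
      have : c00 ≠ 0 ∨ c10 ≠ 0 := by
        by_contra h0
        push_neg at h0
        exact hx0 (by rw [hx', h0.1, h0.2, add_zero])
      rcases this with h00 | h10
      · have hc00I : c00 ∈ I := hI.2.2 c00 x hx ⟨c10, hx'⟩
        exact perp_key hcon I ha hc00I h00 c01 ha'
      · have hc10I : c10 ∈ I := hI.2.2 c10 x hx ⟨c00, by rw [hx', add_comm]⟩
        exact perp_key hcon I hb hc10I h10 c11 hb'
end

section
/- Let M be a conical refinement commutative monoid with an action of an abelian group Γ by monoid automorphisms, and let I be a Γ-order ideal of M. Then the orthogonal set I^⊥ = {a ∈ M | a ∥ I} ∪ {0} is again a Γ-order ideal of M. -/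
variable {M : Type*} [AddCommMonoid M]

variable (Γ : Type*) [CommGroup Γ] [DistribMulAction Γ M]

/-- A Γ-order ideal: an order ideal invariant under the action of Γ. -/
def IsGammaOrderIdeal (I : Set M) : Prop :=
  IsOrderIdeal I ∧ ∀ (g : Γ) (a : M), a ∈ I → g • a ∈ I

/-- An essential Γ-order ideal: meets every nonzero Γ-order ideal nontrivially. -/
def IsEssential (I : Set M) : Prop :=
  IsGammaOrderIdeal Γ I ∧
    ∀ J : Set M, IsGammaOrderIdeal Γ J → J ≠ {0} → I ∩ J ≠ {0}

/-- A uniform Γ-order ideal: nonzero, and any two nonzero Γ-order ideals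
contained in it intersect nontrivially. -/
def IsUniform (I : Set M) : Prop :=
  IsGammaOrderIdeal Γ I ∧ I ≠ {0} ∧
    ∀ J K : Set M, IsGammaOrderIdeal Γ J → IsGammaOrderIdeal Γ K →
      J ⊆ I → K ⊆ I → J ≠ {0} → K ≠ {0} → J ∩ K ≠ {0}

theorem stmt_2 {M : Type*} [AddCommMonoid M] (Γ : Type*) [CommGroup Γ]
    [DistribMulAction Γ M]
    (hcon : IsConical M) (href : IsRefinement M)
    (I : Set M) (hI : IsGammaOrderIdeal Γ I) :
    IsGammaOrderIdeal Γ (perpSet I) := by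
  obtain ⟨⟨h0, hadd, hdc⟩, hg⟩ := hI
  -- characterization: for nonzero a, a ∥ I iff no nonzero element of I lies below a
  have hP : ∀ a : M, a ≠ 0 → (PerpTo a I ↔ ∀ x ∈ I, AlgLE x a → x = 0) := by
    intro a ha
    constructor
    · intro hp x hx hxa
      by_contra hx0
      refine hp x hx hx0 ?_
      obtain ⟨c, hc⟩ := hxa
      rcases eq_or_ne c 0 with rfl | hc0
      · left; simp [hc]
      · right; right; exact ⟨c, hc0, hc⟩
    · intro hp x hx hx0 hcmp
      rcases hcmp with heq | ⟨c, hc0, hc⟩ | ⟨c, hc0, hc⟩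
      · exact hx0 (hp x hx ⟨0, by simp [heq]⟩)
      · have haI : a ∈ I := hdc a x hx ⟨c, hc⟩
        exact ha (hp a haI ⟨0, by simp⟩)
      · exact hx0 (hp x hx ⟨c, hc⟩)
  refine ⟨⟨Or.inl rfl, ?_, ?_⟩, ?_⟩
  · -- closed under addition
    intro a b ha hb
    rcases eq_or_ne a 0 with rfl | ha0
    · simpa using hb
    rcases eq_or_ne b 0 with rfl | hb0
    · simpa using ha
    have hpa : PerpTo a I := ha.resolve_left ha0
    have hpb : PerpTo b I := hb.resolve_left hb0
    have hab0 : a + b ≠ 0 := fun h => ha0 (hcon a b h).1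
    right
    rw [hP _ hab0]
    intro x hx hxab
    obtain ⟨d, hd⟩ := hxab
    obtain ⟨c₀₀, c₀₁, c₁₀, c₁₁, hx1, _, ha1, hb1⟩ := href x d a b hd.symm
    have h00 : c₀₀ = 0 := (hP a ha0).mp hpa c₀₀ (hdc c₀₀ x hx ⟨c₀₁, hx1⟩) ⟨c₁₀, ha1⟩
    have h01 : c₀₁ = 0 := (hP b hb0).mp hpb c₀₁ (hdc c₀₁ x hx ⟨c₀₀, by rw [hx1, add_comm]⟩) ⟨c₁₁, hb1⟩
    simp [hx1, h00, h01]
  · -- downward closed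
    intro a b hb hab
    rcases eq_or_ne a 0 with rfl | ha0
    · exact Or.inl rfl
    have hb0 : b ≠ 0 := by
      rintro rfl
      obtain ⟨c, hc⟩ := hab
      exact ha0 (hcon a c hc.symm).1
    have hpb : PerpTo b I := hb.resolve_left hb0
    right
    rw [hP _ ha0]
    intro x hx hxa
    obtain ⟨c, hc⟩ := hxa
    obtain ⟨d, hd⟩ := hab
    exact (hP b hb0).mp hpb x hx ⟨c + d, by rw [hd, hc, add_assoc]⟩
  · -- Γ-invariance
    intro g a ha
    rcases eq_or_ne a 0 with rfl | ha0
    · left; simp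
    have hpa : PerpTo a I := ha.resolve_left ha0
    have hga0 : g • a ≠ 0 := by
      intro h
      apply ha0
      have := congrArg (fun y => g⁻¹ • y) h
      simpa using this
    right
    rw [hP _ hga0]
    intro x hx hxga
    obtain ⟨c, hc⟩ := hxga
    have hxI : g⁻¹ • x ∈ I := hg g⁻¹ x hx
    have hle : AlgLE (g⁻¹ • x) a := by
      refine ⟨g⁻¹ • c, ?_⟩
      have := congrArg (fun y => g⁻¹ • y) hc
      simpa [smul_add] using this
    have hx0 : g⁻¹ • x = 0 := (hP a ha0).mp hpa _ hxI hle
    have := congrArg (fun y => g • y) hx0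
    simpa using this
end

section
/- Let M be a conical refinement commutative Γ-monoid and I a Γ-order ideal of M. If M = I ⊕ I^⊥ (i.e., M = I + I^⊥ and I ∩ I^⊥ = {0}), then I is regular, that is, I^⊥⊥ = I. -/
variable {M : Type*} [AddCommMonoid M]

variable (Γ : Type*) [CommGroup Γ] [DistribMulAction Γ M]

theorem stmt_3 {M : Type*} [AddCommMonoid M] (Γ : Type*) [CommGroup Γ]
    [DistribMulAction Γ M]
    (hcon : IsConical M) (href : IsRefinement M)
    (I : Set M) (hI : IsGammaOrderIdeal Γ I)
    (hsum : ∀ x : M, ∃ a ∈ I, ∃ b ∈ perpSet I, x = a + b)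
    (hdisj : I ∩ perpSet I = {0}) :
    perpSet (perpSet I) = I := by
  ext m
  constructor
  · rintro (rfl | hm)
    · exact hI.1.1
    · obtain ⟨a, ha, b, hb, heq⟩ := hsum m
      by_cases hb0 : b = 0
      · subst hb0; rw [heq, add_zero]; exact ha
      · exfalso
        apply hm b hb hb0
        by_cases ha0 : a = 0
        · exact Or.inl (by rw [heq, ha0, zero_add])
        · exact Or.inr (Or.inr ⟨a, ha0, by rw [heq, add_comm]⟩)
  · intro hmI
    by_cases hm0 : m = 0
    · exact Or.inl hm0
    · refine Or.inr (fun x hx hx0 hcmp => ?_)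
      rcases hx with rfl | hperp
      · exact hx0 rfl
      · apply hperp m hmI hm0
        rcases hcmp with h | h | h
        · exact Or.inl h.symm
        · exact Or.inr (Or.inr h)
        · exact Or.inr (Or.inl h)
end

section
/- Let M be a conical refinement commutative Γ-monoid and {I_s}_{s∈S} a family of nonzero Γ-order ideals. The sum Σ_{s∈S} I_s is a direct sum (each I_t intersects the sum of the others trivially) if and only if the ideals are pairwise disjoint, i.e., I_s ∩ I_t = {0} for all s ≠ t. -/
variable {M : Type*} [AddCommMonoid M]

variable (Γ : Type*) [CommGroup Γ] [DistribMulAction Γ M]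

theorem stmt_6 {M : Type*} [AddCommMonoid M] (Γ : Type*) [CommGroup Γ]
    [DistribMulAction Γ M]
    (hcon : IsConical M) (href : IsRefinement M)
    {S : Type*} (I : S → Set M)
    (hI : ∀ s, IsGammaOrderIdeal Γ (I s)) (hnz : ∀ s, I s ≠ {0}) :
    (∀ t : S,
        I t ∩ ((AddSubmonoid.closure (⋃ s, ⋃ (_ : s ≠ t), I s) : AddSubmonoid M) : Set M)
          = {0}) ↔
      Pairwise fun s t => I s ∩ I t = {0} := by
  constructor
  · intro h s t hst
    ext x
    simp only [Set.mem_inter_iff, Set.mem_singleton_iff]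
    constructor
    · rintro ⟨hxs, hxt⟩
      have hxcl : x ∈ (AddSubmonoid.closure (⋃ s', ⋃ (_ : s' ≠ t), I s') : AddSubmonoid M) :=
        AddSubmonoid.subset_closure (Set.mem_iUnion.2 ⟨s, Set.mem_iUnion.2 ⟨hst, hxs⟩⟩)
      have := h t
      have : x ∈ ({0} : Set M) := this ▸ Set.mem_inter hxt hxcl
      simpa using this
    · rintro rfl
      exact ⟨(hI s).1.1, (hI t).1.1⟩
  · intro h t
    ext x
    simp only [Set.mem_inter_iff, Set.mem_singleton_iff, SetLike.mem_coe]
    constructor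
    · rintro ⟨hxt, hxcl⟩
      -- prove by closure induction: any element of the closure that lies in I t is 0
      have key : ∀ y ∈ AddSubmonoid.closure (⋃ s, ⋃ (_ : s ≠ t), I s), y ∈ I t → y = 0 := by
        intro y hy
        induction hy using AddSubmonoid.closure_induction with
        | mem z hz =>
          intro hzt
          obtain ⟨s, hs⟩ := Set.mem_iUnion.1 hz
          obtain ⟨hst, hzs⟩ := Set.mem_iUnion.1 hs
          have : z ∈ I s ∩ I t := ⟨hzs, hzt⟩
          rw [h hst] at this
          simpa using this
        | zero => intro _; rfl
        | add a b _ _ iha ihb =>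
          intro hab
          have hat : a ∈ I t := (hI t).1.2.2 a (a + b) hab ⟨b, rfl⟩
          have hbt : b ∈ I t := (hI t).1.2.2 b (a + b) hab ⟨a, add_comm a b⟩
          rw [iha hat, ihb hbt, add_zero]
      exact key x hxcl hxt
    · rintro rfl
      exact ⟨(hI t).1.1, (AddSubmonoid.closure _).zero_mem⟩
end

section
/- Let M be a conical refinement commutative Γ-monoid. Suppose I = I₁ ⊕ ... ⊕ I_m and J = J₁ ⊕ ... ⊕ J_n are both essential Γ-order ideals of M, where all I_k and J_l are uniform Γ-order ideals. Then m = n. -/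
variable {M : Type*} [AddCommMonoid M]

variable (Γ : Type*) [CommGroup Γ] [DistribMulAction Γ M]

/-- From a set with `0` that is not `{0}`, extract a nonzero element. -/
lemma exists_ne_zero_of_ne_zero {S : Set M} (h0 : (0 : M) ∈ S) (h : S ≠ {0}) :
    ∃ a ∈ S, a ≠ 0 := by
  by_contra hc
  push_neg at hc
  apply h
  ext a
  simp only [Set.mem_singleton_iff]
  constructor
  · intro ha; by_contra hne; exact hne (hc a ha)
  · rintro rfl; exact h0

/-- Nonemptiness of a set containing a nonzero element. -/
lemma ne_singleton_zero_of_mem {S : Set M} {a : M} (ha : a ∈ S) (h : a ≠ 0) :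
    S ≠ {0} := by
  intro hS; rw [hS] at ha; exact h ha

/-- The intersection of two Γ-order ideals is a Γ-order ideal. -/
lemma inter_gammaOrderIdeal {I J : Set M} (hI : IsGammaOrderIdeal Γ I)
    (hJ : IsGammaOrderIdeal Γ J) : IsGammaOrderIdeal Γ (I ∩ J) := by
  obtain ⟨⟨hI0, hIadd, hIdown⟩, hIg⟩ := hI
  obtain ⟨⟨hJ0, hJadd, hJdown⟩, hJg⟩ := hJ
  refine ⟨⟨⟨hI0, hJ0⟩, ?_, ?_⟩, ?_⟩
  · rintro a b ⟨haI, haJ⟩ ⟨hbI, hbJ⟩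
    exact ⟨hIadd a b haI hbI, hJadd a b haJ hbJ⟩
  · rintro a b ⟨hbI, hbJ⟩ hab
    exact ⟨hIdown a b hbI hab, hJdown a b hbJ hab⟩
  · rintro g a ⟨haI, haJ⟩
    exact ⟨hIg g a haI, hJg g a haJ⟩

/-- Elements of the closure of a union of add-closed sets containing `0`
are sums with one term per index. -/
lemma mem_closure_iUnion_eq_sum {m : ℕ} {I : Fin m → Set M}
    (h0 : ∀ k, (0 : M) ∈ I k) (hadd : ∀ k, ∀ a b : M, a ∈ I k → b ∈ I k → a + b ∈ I k)
    {a : M} (ha : a ∈ AddSubmonoid.closure (⋃ k, I k)) :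
    ∃ x : Fin m → M, (∀ k, x k ∈ I k) ∧ a = ∑ k, x k := by
  induction ha using AddSubmonoid.closure_induction with
  | mem y hy =>
      obtain ⟨k, hk⟩ := Set.mem_iUnion.mp hy
      refine ⟨fun s => if h : s = k then y else 0, fun s => ?_, ?_⟩
      · by_cases h : s = k
        · subst h; simp [hk]
        · simp [h, h0 s]
      · simp
  | zero => exact ⟨fun _ => 0, fun k => h0 k, by simp⟩
  | add b c _ _ hb hc =>
      obtain ⟨x, hx, rfl⟩ := hb
      obtain ⟨y, hy, rfl⟩ := hc
      exact ⟨fun k => x k + y k, fun k => hadd k _ _ (hx k) (hy k),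
        (Finset.sum_add_distrib).symm⟩

/-- Key counting lemma: given an independent family `I` of uniform Γ-order ideals whose
sum is essential, and an independent family `J` of uniform Γ-order ideals, `n ≤ m`. -/
lemma key_card_le {m n : ℕ} (I : Fin m → Set M) (J : Fin n → Set M)
    (hIu : ∀ k, IsUniform Γ (I k)) (hJu : ∀ l, IsUniform Γ (J l))
    (hIdir : ∀ t, I t ∩
      ((AddSubmonoid.closure (⋃ s, ⋃ (_ : s ≠ t), I s) : AddSubmonoid M) : Set M) = {0})
    (hJdir : ∀ t, J t ∩
      ((AddSubmonoid.closure (⋃ s, ⋃ (_ : s ≠ t), J s) : AddSubmonoid M) : Set M) = {0})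
    (hIe : IsEssential Γ ((AddSubmonoid.closure (⋃ k, I k) : AddSubmonoid M) : Set M)) :
    n ≤ m := by
  classical
  -- disjointness of distinct members of I, resp. J
  have hIdisj : ∀ i i' : Fin m, i ≠ i' → ∀ a : M, a ∈ I i → a ∈ I i' → a = 0 := by
    intro i i' hne a hai hai'
    have hsub : a ∈ (AddSubmonoid.closure (⋃ s, ⋃ (_ : s ≠ i), I s) : AddSubmonoid M) :=
      AddSubmonoid.subset_closure (Set.mem_iUnion.mpr ⟨i', Set.mem_iUnion.mpr
        ⟨Ne.symm hne, hai'⟩⟩)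
    have := hIdir i
    have : a ∈ ({0} : Set M) := this ▸ Set.mem_inter hai hsub
    exact this
  have hJdisj : ∀ j j' : Fin n, j ≠ j' → ∀ a : M, a ∈ J j → a ∈ J j' → a = 0 := by
    intro j j' hne a haj haj'
    have hsub : a ∈ (AddSubmonoid.closure (⋃ s, ⋃ (_ : s ≠ j), J s) : AddSubmonoid M) :=
      AddSubmonoid.subset_closure (Set.mem_iUnion.mpr ⟨j', Set.mem_iUnion.mpr
        ⟨Ne.symm hne, haj'⟩⟩)
    have := hJdir j
    have : a ∈ ({0} : Set M) := this ▸ Set.mem_inter haj hsub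
    exact this
  -- for every j there is i with I i ∩ J j ≠ {0}
  have hex : ∀ j : Fin n, ∃ i : Fin m, I i ∩ J j ≠ {0} := by
    intro j
    obtain ⟨hJid, hJne, _⟩ := hJu j
    have hmeet := hIe.2 (J j) hJid hJne
    have h0mem : (0 : M) ∈ ((AddSubmonoid.closure (⋃ k, I k) : AddSubmonoid M) : Set M)
        ∩ J j := ⟨(AddSubmonoid.closure (⋃ k, I k)).zero_mem, hJid.1.1⟩
    obtain ⟨a, ⟨haC, haJ⟩, ha0⟩ := exists_ne_zero_of_ne_zero h0mem hmeet
    obtain ⟨x, hx, rfl⟩ := mem_closure_iUnion_eq_sum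
      (fun k => (hIu k).1.1.1) (fun k => (hIu k).1.1.2.1) haC
    have hxne : ∃ i, x i ≠ 0 := by
      by_contra hc
      push_neg at hc
      exact ha0 (by simp [hc])
    obtain ⟨i, hxi⟩ := hxne
    refine ⟨i, ?_⟩
    have hle : AlgLE (x i) (∑ k, x k) :=
      ⟨∑ k ∈ Finset.univ.erase i, x k, (Finset.add_sum_erase _ _ (Finset.mem_univ i)).symm⟩
    have hxJ : x i ∈ J j := hJid.1.2.2 _ _ haJ hle
    exact ne_singleton_zero_of_mem ⟨hx i, hxJ⟩ hxi
  -- uniqueness of such i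
  have huniq : ∀ (j : Fin n) (i i' : Fin m),
      I i ∩ J j ≠ {0} → I i' ∩ J j ≠ {0} → i = i' := by
    intro j i i' h h'
    by_contra hne
    obtain ⟨hJid, _, hJunif⟩ := hJu j
    have hmeet := hJunif (I i ∩ J j) (I i' ∩ J j)
      (inter_gammaOrderIdeal Γ (hIu i).1 hJid) (inter_gammaOrderIdeal Γ (hIu i').1 hJid)
      Set.inter_subset_right Set.inter_subset_right h h'
    have h0mem : (0 : M) ∈ (I i ∩ J j) ∩ (I i' ∩ J j) :=
      ⟨⟨(hIu i).1.1.1, hJid.1.1⟩, ⟨(hIu i').1.1.1, hJid.1.1⟩⟩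
    obtain ⟨a, ⟨⟨hai, _⟩, ⟨hai', _⟩⟩, ha0⟩ := exists_ne_zero_of_ne_zero h0mem hmeet
    exact ha0 (hIdisj i i' hne a hai hai')
  choose f hf using hex
  have hinj : Function.Injective f := by
    intro j j' hjj'
    by_contra hne
    obtain ⟨hIid, _, hIunif⟩ := hIu (f j)
    have hfj' : I (f j) ∩ J j' ≠ {0} := by rw [hjj']; exact hf j'
    have hmeet := hIunif (I (f j) ∩ J j) (I (f j) ∩ J j')
      (inter_gammaOrderIdeal Γ hIid (hJu j).1) (inter_gammaOrderIdeal Γ hIid (hJu j').1)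
      Set.inter_subset_left Set.inter_subset_left (hf j) hfj'
    have h0mem : (0 : M) ∈ (I (f j) ∩ J j) ∩ (I (f j) ∩ J j') :=
      ⟨⟨hIid.1.1, (hJu j).1.1.1⟩, ⟨hIid.1.1, (hJu j').1.1.1⟩⟩
    obtain ⟨a, ⟨⟨_, haj⟩, ⟨_, haj'⟩⟩, ha0⟩ := exists_ne_zero_of_ne_zero h0mem hmeet
    exact ha0 (hJdisj j j' hne a haj haj')
  simpa using Fintype.card_le_of_injective f hinj

theorem stmt_7 {M : Type*} [AddCommMonoid M] (Γ : Type*) [CommGroup Γ]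
    [DistribMulAction Γ M]
    (hcon : IsConical M) (href : IsRefinement M)
    {m n : ℕ} (I : Fin m → Set M) (J : Fin n → Set M)
    (hIu : ∀ k, IsUniform Γ (I k)) (hJu : ∀ l, IsUniform Γ (J l))
    (hIdir : ∀ t, I t ∩
      ((AddSubmonoid.closure (⋃ s, ⋃ (_ : s ≠ t), I s) : AddSubmonoid M) : Set M) = {0})
    (hJdir : ∀ t, J t ∩
      ((AddSubmonoid.closure (⋃ s, ⋃ (_ : s ≠ t), J s) : AddSubmonoid M) : Set M) = {0})
    (hIe : IsEssential Γ ((AddSubmonoid.closure (⋃ k, I k) : AddSubmonoid M) : Set M))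
    (hJe : IsEssential Γ ((AddSubmonoid.closure (⋃ l, J l) : AddSubmonoid M) : Set M)) :
    m = n :=
  le_antisymm (key_card_le Γ J I hJu hIu hJdir hIdir hJe)
    (key_card_le Γ I J hIu hJu hIdir hJdir hIe)
end

section
/- Let E be a row-finite directed graph, H ⊆ E⁰ a hereditary subset, and v ∈ E⁰ \ H. Then v belongs to the hereditary and saturated closure of H if and only if for every vertex w in the tree T(v) with w ∉ H, there is a nonzero but finite number of paths starting at w that flow to H. -/
/-! Directed graphs are given by types `V` (vertices), `E` (edges) and maps
`s r : E → V` (source and range). -/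

/-- `PathTo s r u v l` : the list of edges `l` is a path from `u` to `v`
(the empty list is the trivial path at `u = v`). -/
inductive PathTo {V E : Type*} (s r : E → V) : V → V → List E → Prop
  | nil (v : V) : PathTo s r v v []
  | cons (e : E) {w : V} {l : List E} :
      PathTo s r (r e) w l → PathTo s r (s e) w (e :: l)

variable {V E : Type*}

/-- `u ≥ v` : there is a finite path from `u` to `v`. -/
def Reach (s r : E → V) (u v : V) : Prop := ∃ l : List E, PathTo s r u v l

/-- A subset of vertices is hereditary if it is closed under ranges of edges. -/
def Hereditary (s r : E → V) (H : Set V) : Prop := ∀ e : E, s e ∈ H → r e ∈ H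

/-- A subset of vertices is saturated if it contains every regular vertex all of
whose out-neighbours lie in the set. -/
def Saturated (s r : E → V) (H : Set V) : Prop :=
  ∀ v : V, (∃ e, s e = v) → (∀ e, s e = v → r e ∈ H) → v ∈ H

/-- `R(H)` : the set of vertices from which there is a finite path into `H`. -/
def ReachSet (s r : E → V) (H : Set V) : Set V := {u : V | ∃ v ∈ H, Reach s r u v}

/-- `T(w)` : the tree rooted at `w`, i.e. the set of vertices reachable from `w`. -/
def TreeOf (s r : E → V) (w : V) : Set V := {v : V | Reach s r w v}

/-- `H^⊥ = E⁰ \ R(H)`. -/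
def Hperp (s r : E → V) (H : Set V) : Set V := Set.univ \ ReachSet s r H

/-- The hereditary and saturated closure of a set of vertices. -/
def HSClosure (s r : E → V) (X : Set V) : Set V :=
  ⋂₀ {S : Set V | X ⊆ S ∧ Hereditary s r S ∧ Saturated s r S}

/-- A cycle: a nonempty closed path whose edges have pairwise distinct sources. -/
def IsCycle (s r : E → V) (l : List E) : Prop :=
  ∃ v : V, l ≠ [] ∧ PathTo s r v v l ∧ (l.map s).Nodup

/-- A path (given as a nonempty list of edges starting at `w`) flows to `H` if its
last edge has source outside `H` and range inside `H`. -/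
def FlowsTo (s r : E → V) (H : Set V) (w : V) (l : List E) : Prop :=
  (∃ u : V, PathTo s r w u l) ∧ ∃ e : E, l.getLast? = some e ∧ s e ∉ H ∧ r e ∈ H


section Aux

variable {V E : Type*} {s r : E → V} {H : Set V}

private lemma PathTo.append' {u w x : V} {l l' : List E} (h : PathTo s r u w l)
    (h' : PathTo s r w x l') : PathTo s r u x (l ++ l') := by
  induction h with
  | nil => simpa using h'
  | cons e _ ih => exact PathTo.cons e (ih h')

private lemma getLast?_cons_ne {e : E} {tl : List E} (h : tl ≠ []) :
    (e :: tl).getLast? = tl.getLast? := by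
  cases tl with
  | nil => exact absurd rfl h
  | cons b l => exact List.getLast?_cons_cons

private lemma mem_of_getLast?' {l : List E} {e : E} (h : l.getLast? = some e) : e ∈ l := by
  obtain ⟨h', he⟩ := List.mem_getLast?_eq_getLast (show e ∈ l.getLast? from h)
  exact he ▸ List.getLast_mem h'

private lemma sources_mem_of_mem (hH : Hereditary s r H) {u w : V} {l : List E}
    (h : PathTo s r u w l) (hu : u ∈ H) : ∀ e ∈ l, s e ∈ H := by
  induction h with
  | nil => simp
  | cons e hp ih =>
    intro e' he'
    rcases List.mem_cons.mp he' with h1 | h2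
    · exact h1 ▸ hu
    · exact ih (hH e hu) e' h2

private lemma flows_empty_of_mem (hH : Hereditary s r H) {w : V} (hw : w ∈ H) :
    {l : List E | FlowsTo s r H w l} = ∅ := by
  ext l
  simp only [Set.mem_setOf_eq, Set.mem_empty_iff_false, iff_false]
  rintro ⟨⟨u, hp⟩, e, hlast, hs', hr'⟩
  exact hs' (sources_mem_of_mem hH hp hw e (mem_of_getLast?' hlast))

private lemma reach_mem_of_hereditary {S : Set V} (hS : Hereditary s r S) {u w : V}
    {l : List E} (h : PathTo s r u w l) (hu : u ∈ S) : w ∈ S := by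
  induction h with
  | nil => exact hu
  | cons e hp ih => exact ih (hS e hu)

/-- The increasing filtration whose union is the hereditary saturated closure. -/
private def Lam (s r : E → V) (H : Set V) : ℕ → Set V
  | 0 => H
  | n + 1 => Lam s r H n ∪
      {w : V | (∃ e, s e = w) ∧ ∀ e, s e = w → r e ∈ Lam s r H n}

private lemma Lam_mono (s r : E → V) (H : Set V) : Monotone (Lam s r H) :=
  monotone_nat_of_le_succ fun _ => Set.subset_union_left

private lemma Lam_hereditary (hH : Hereditary s r H) : ∀ n, Hereditary s r (Lam s r H n)
  | 0 => hH
  | n + 1 => by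
    rintro e (he | ⟨_, hall⟩)
    · exact Set.subset_union_left (Lam_hereditary hH n e he)
    · exact Set.subset_union_left (hall e rfl)

private lemma flows_finite_nonempty (hrow : ∀ v : V, {e : E | s e = v}.Finite)
    (hH : Hereditary s r H) :
    ∀ n, ∀ w ∈ Lam s r H n, w ∉ H →
      ({l : List E | FlowsTo s r H w l}.Finite ∧
        {l : List E | FlowsTo s r H w l}.Nonempty)
  | 0, w, hw, hwH => absurd hw hwH
  | n + 1, w, hw, hwH => by
    rcases hw with hw | ⟨⟨e₀, he₀⟩, hall⟩
    · exact flows_finite_nonempty hrow hH n w hw hwH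
    constructor
    · -- finiteness: decompose first edge
      have hsub : {l : List E | FlowsTo s r H w l} ⊆
          ⋃ e ∈ {e : E | s e = w},
            (fun l => e :: l) '' insert [] {l : List E | FlowsTo s r H (r e) l} := by
        rintro l ⟨⟨u, hp⟩, e', hlast, hs', hr'⟩
        cases hp with
        | nil => simp at hlast
        | cons e hp' =>
          rename_i tl
          refine Set.mem_biUnion (show e ∈ {e' : E | s e' = s e} from rfl) ?_
          refine ⟨tl, ?_, rfl⟩
          rcases eq_or_ne tl [] with h | h
          · exact h ▸ Set.mem_insert _ _
          · refine Set.mem_insert_of_mem _ ⟨⟨u, hp'⟩, e', ?_, hs', hr'⟩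
            rw [← getLast?_cons_ne h]; exact hlast
      refine Set.Finite.subset (Set.Finite.biUnion (hrow w) fun e he => ?_) hsub
      refine Set.Finite.image _ (Set.Finite.insert _ ?_)
      by_cases hre : r e ∈ H
      · rw [flows_empty_of_mem hH hre]; exact Set.finite_empty
      · exact (flows_finite_nonempty hrow hH n (r e) (hall e he) hre).1
    · -- nonemptiness
      by_cases hre : r e₀ ∈ H
      · refine ⟨[e₀], ⟨r e₀, ?_⟩, e₀, rfl, he₀ ▸ hwH, hre⟩
        exact he₀ ▸ PathTo.cons e₀ (PathTo.nil _)
      · obtain ⟨l, ⟨u, hp⟩, e', hlast, hs', hr'⟩ :=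
          (flows_finite_nonempty hrow hH n (r e₀) (hall e₀ he₀) hre).2
        have hne : l ≠ [] := by rintro rfl; simp at hlast
        refine ⟨e₀ :: l, ⟨u, he₀ ▸ PathTo.cons e₀ hp⟩, e', ?_, hs', hr'⟩
        rw [getLast?_cons_ne hne]; exact hlast

private lemma LamU_mem_family (hrow : ∀ v : V, {e : E | s e = v}.Finite)
    (hH : Hereditary s r H) :
    (⋃ n, Lam s r H n) ∈
      {S : Set V | H ⊆ S ∧ Hereditary s r S ∧ Saturated s r S} := by
  refine ⟨Set.subset_iUnion (Lam s r H) 0, ?_, ?_⟩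
  · intro e he
    obtain ⟨n, hn⟩ := Set.mem_iUnion.mp he
    exact Set.mem_iUnion.mpr ⟨n, Lam_hereditary hH n e hn⟩
  · intro w hreg hall
    have h1 : ∀ e : E, ∃ n, s e = w → r e ∈ Lam s r H n := by
      intro e
      by_cases h : s e = w
      · obtain ⟨n, hn⟩ := Set.mem_iUnion.mp (hall e h)
        exact ⟨n, fun _ => hn⟩
      · exact ⟨0, fun hc => absurd hc h⟩
    choose f hf using h1
    obtain ⟨N, hN⟩ := ((hrow w).image f).bddAbove
    refine Set.mem_iUnion.mpr ⟨N + 1, Or.inr ⟨hreg, fun e he => ?_⟩⟩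
    exact Lam_mono s r H (hN ⟨e, he, rfl⟩) (hf e he)

end Aux

theorem stmt_8 {V E : Type*} (s r : E → V)
    (hrow : ∀ v : V, {e : E | s e = v}.Finite)
    (H : Set V) (hH : Hereditary s r H) (v : V) (hv : v ∉ H) :
    v ∈ HSClosure s r H ↔
      ∀ w ∈ TreeOf s r v, w ∉ H →
        ({l : List E | FlowsTo s r H w l}.Finite ∧
          {l : List E | FlowsTo s r H w l}.Nonempty) := by
  constructor
  · -- forward
    intro hvC w hwT hwH
    have hvU : v ∈ ⋃ n, Lam s r H n := hvC _ (LamU_mem_family hrow hH)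
    obtain ⟨l, hp⟩ := hwT
    have hwU : w ∈ ⋃ n, Lam s r H n :=
      reach_mem_of_hereditary (LamU_mem_family hrow hH).2.1 hp hvU
    obtain ⟨n, hn⟩ := Set.mem_iUnion.mp hwU
    exact flows_finite_nonempty hrow hH n w hn hwH
  · -- backward
    intro hyp
    intro S hS
    obtain ⟨hHS, hSher, hSsat⟩ : H ⊆ S ∧ Hereditary s r S ∧ Saturated s r S := hS
    have hvT : v ∈ TreeOf s r v := ⟨[], PathTo.nil v⟩
    obtain ⟨hfin, _⟩ := hyp v hvT hv
    obtain ⟨n, hn⟩ := (hfin.image List.length).bddAbove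
    have key : ∀ m, ∀ w, w ∈ TreeOf s r v → w ∉ H →
        (∀ l ∈ {l : List E | FlowsTo s r H w l}, l.length ≤ m) → w ∈ S := by
      intro m
      induction m with
      | zero =>
        intro w hwT hwH hlen
        obtain ⟨l, hl⟩ := (hyp w hwT hwH).2
        have hlen0 := hlen l hl
        obtain ⟨_, e', hlast, _, _⟩ := hl
        have : l = [] := List.length_eq_zero_iff.mp (Nat.le_zero.mp hlen0)
        rw [this] at hlast
        simp at hlast
      | succ m ih =>
        intro w hwT hwH hlen
        obtain ⟨l, hl⟩ := (hyp w hwT hwH).2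
        obtain ⟨⟨u, hp⟩, e', hlast, _, _⟩ := hl
        cases hp with
        | nil => simp at hlast
        | cons e hp' =>
          refine hSsat _ ⟨e, rfl⟩ ?_
          intro e₁ he₁
          by_cases hcase : r e₁ ∈ H
          · exact hHS hcase
          · have hT : r e₁ ∈ TreeOf s r v := by
              obtain ⟨l₀, hp₀⟩ := hwT
              exact ⟨l₀ ++ [e₁],
                PathTo.append' hp₀ (he₁ ▸ PathTo.cons e₁ (PathTo.nil _))⟩
            refine ih (r e₁) hT hcase ?_
            rintro l' ⟨⟨u', hp''⟩, e₂, hlast₂, hs₂, hr₂⟩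
            have hne : l' ≠ [] := by rintro rfl; simp at hlast₂
            have hflow : FlowsTo s r H (s e) (e₁ :: l') := by
              refine ⟨⟨u', he₁ ▸ PathTo.cons e₁ hp''⟩, e₂, ?_, hs₂, hr₂⟩
              rw [getLast?_cons_ne hne]; exact hlast₂
            have := hlen _ hflow
            simpa using this
    refine key n v hvT hv ?_
    intro l hl
    exact hn ⟨l, hl, rfl⟩
end

section
/- Let E be a finite graph containing a cycle c that has an exit with no return to c. Then there exists a hereditary saturated subset H of E⁰ that is not regular, i.e., H^⊥⊥ ≠ H. Concretely, one may take H to be the hereditary saturated closure of X = {v ∈ E⁰ | there is a path from c⁰ to v but no path from v to c⁰}. -/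
variable {V E : Type*}

theorem pathTo_append {s r : E → V} {u v w : V} {l l' : List E}
    (h : PathTo s r u v l) (h' : PathTo s r v w l') : PathTo s r u w (l ++ l') := by
  induction h with
  | nil => exact h'
  | cons e _ ih => exact PathTo.cons e (ih h')

theorem reach_trans {s r : E → V} {u v w : V}
    (h : Reach s r u v) (h' : Reach s r v w) : Reach s r u w := by
  obtain ⟨l, hl⟩ := h; obtain ⟨l', hl'⟩ := h'
  exact ⟨l ++ l', pathTo_append hl hl'⟩

theorem reach_refl {s r : E → V} (u : V) : Reach s r u u := ⟨[], PathTo.nil u⟩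

/-- from the start of a path to the source of any of its edges -/
theorem reach_src_of_mem {s r : E → V} {u w : V} {l : List E}
    (h : PathTo s r u w l) {e : E} (he : e ∈ l) : Reach s r u (s e) := by
  induction h with
  | nil => cases he
  | cons e₀ hp ih =>
      rcases List.mem_cons.mp he with h1 | h1
      · subst h1; exact reach_refl _
      · obtain ⟨l', hl'⟩ := ih h1
        exact ⟨e₀ :: l', PathTo.cons e₀ hl'⟩

/-- from the range of any edge of a path to the end of the path -/
theorem reach_of_range_mem {s r : E → V} {u w : V} {l : List E}
    (h : PathTo s r u w l) {e : E} (he : e ∈ l) : Reach s r (r e) w := by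
  induction h with
  | nil => cases he
  | cons e₀ hp ih =>
      rcases List.mem_cons.mp he with h1 | h1
      · subst h1; exact ⟨_, hp⟩
      · exact ih h1

theorem hsClosure_subset {s r : E → V} (X : Set V) : X ⊆ HSClosure s r X :=
  fun v hv => Set.mem_sInter.mpr fun _ hS => hS.1 hv

theorem hsClosure_hereditary {s r : E → V} (X : Set V) :
    Hereditary s r (HSClosure s r X) := fun e he =>
  Set.mem_sInter.mpr fun S hS => hS.2.1 e (Set.mem_sInter.mp he S hS)

theorem hsClosure_saturated {s r : E → V} (X : Set V) :
    Saturated s r (HSClosure s r X) := fun v hreg hall =>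
  Set.mem_sInter.mpr fun S hS =>
    hS.2.2 v hreg fun e hse => Set.mem_sInter.mp (hall e hse) S hS

theorem hsClosure_min {s r : E → V} {X S : Set V}
    (h1 : X ⊆ S) (h2 : Hereditary s r S) (h3 : Saturated s r S) :
    HSClosure s r X ⊆ S :=
  Set.sInter_subset_of_mem ⟨h1, h2, h3⟩

/-- from the source of any edge of a path to the end of the path -/
theorem reach_src_to_end {s r : E → V} {u w : V} {l : List E}
    (h : PathTo s r u w l) {e : E} (he : e ∈ l) : Reach s r (s e) w := by
  induction h with
  | nil => cases he
  | cons e₀ hp ih =>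
      rcases List.mem_cons.mp he with h1 | h1
      · subst h1; exact ⟨_ :: _, PathTo.cons _ hp⟩
      · exact ih h1

theorem stmt_17 {V E : Type*} [Finite V] [Finite E] (s r : E → V)
    (c : List E) (hc : IsCycle s r c)
    (f : E) (hexit : (∃ e ∈ c, s e = s f) ∧ f ∉ c)
    (hnoreturn : ¬ ∃ e ∈ c, Reach s r (r f) (s e)) :
    ∃ H : Set V, Hereditary s r H ∧ Saturated s r H ∧
      Hperp s r (Hperp s r H) ≠ H ∧
      H = HSClosure s r
        {v : V | (∃ e ∈ c, Reach s r (s e) v) ∧ ¬ ∃ e ∈ c, Reach s r v (s e)} := by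
  obtain ⟨⟨e, hec, hse⟩, -⟩ := hexit
  obtain ⟨u, hne, hcyc, -⟩ := hc
  set X : Set V :=
    {v : V | (∃ e ∈ c, Reach s r (s e) v) ∧ ¬ ∃ e ∈ c, Reach s r v (s e)} with hXdef
  set S : Set V := {v : V | ¬ ∃ e ∈ c, Reach s r v (s e)} with hSdef
  -- basic reach facts about the cycle
  have hrange : ∀ e' ∈ c, Reach s r (r e') u := fun e' h => reach_of_range_mem hcyc h
  have hsrc : ∀ e' ∈ c, Reach s r u (s e') := fun e' h => reach_src_of_mem hcyc h
  have hend : ∀ e' ∈ c, Reach s r (s e') u := fun e' h => reach_src_to_end hcyc h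
  -- S is hereditary
  have hShered : Hereditary s r S := by
    intro e' he'
    rintro ⟨e'', he''c, l, hl⟩
    exact he' ⟨e'', he''c, e' :: l, PathTo.cons e' hl⟩
  -- S is saturated
  have hSsat : Saturated s r S := by
    intro v _ hall
    by_contra hvS
    rw [hSdef, Set.mem_setOf_eq, not_not] at hvS
    obtain ⟨e', he'c, l, hl⟩ := hvS
    cases hl with
    | nil =>
        exact hall e' rfl ⟨e, hec, reach_trans (hrange e' he'c) (hsrc e hec)⟩
    | cons e₁ hp =>
        exact hall e₁ rfl ⟨e', he'c, _, hp⟩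
  have hXS : X ⊆ S := fun v hv => hv.2
  refine ⟨HSClosure s r X, hsClosure_hereditary X, hsClosure_saturated X, ?_, rfl⟩
  have hHS : HSClosure s r X ⊆ S := hsClosure_min hXS hShered hSsat
  -- s f is not in the closure
  have hsfH : s f ∉ HSClosure s r X := by
    intro h
    exact hHS h ⟨e, hec, by rw [hse]; exact reach_refl _⟩
  -- r f is in X
  have hrfX : r f ∈ X := by
    refine ⟨⟨e, hec, ?_⟩, hnoreturn⟩
    rw [hse]
    exact ⟨[f], PathTo.cons f (PathTo.nil _)⟩
  have hrfH : r f ∈ HSClosure s r X := hsClosure_subset X hrfX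
  -- s f is in Hperp (Hperp H)
  have hsfperp : s f ∈ Hperp s r (Hperp s r (HSClosure s r X)) := by
    refine ⟨trivial, ?_⟩
    rintro ⟨v, hv, hre⟩
    apply hv.2
    by_cases hvC : ∃ e' ∈ c, Reach s r v (s e')
    · obtain ⟨e', he'c, hv'⟩ := hvC
      refine ⟨r f, hrfH, reach_trans hv' (reach_trans (hend e' he'c)
        (reach_trans (hsrc e hec) ?_))⟩
      rw [hse]
      exact ⟨[f], PathTo.cons f (PathTo.nil _)⟩
    · refine ⟨v, hsClosure_subset X ⟨⟨e, hec, ?_⟩, hvC⟩, reach_refl _⟩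
      rw [hse]
      exact hre
  intro heq
  rw [heq] at hsfperp
  exact hsfH hsfperp
end
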